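/- arXiv:math/0506358 — 2 statements merged into one kernel-verified Lean document; each statement's English description precedes it below -/
import Mathlib

section
/- If a permutation τ of {1,…,n} is obtained from a permutation σ by a single allowed interchange (swapping the adjacent entries σ(j), σ(j+1) of an occurrence i < j of the pattern 2-31 that is not contained in any occurrence of 3-1-42), then σ and τ have the same pile configuration under Patience Sorting: R(τ) = R(σ). -/
/-- One step of Patience Sorting: place card `c` on the leftmost pile whose top
(head) is larger than `c`, or start a new pile on the right.  Piles are stored
top-first, so each pile is an increasing list whose head is the top (smallest) card. -/
def PSinsert (c : ℕ) : List (List ℕ) → List (List ℕ)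
  | [] => [[c]]
  | [] :: ps => [] :: PSinsert c ps
  | (x :: p) :: ps =>
      if c < x then (c :: x :: p) :: ps else (x :: p) :: PSinsert c ps

/-- The pile configuration `R(w)` produced by Patience Sorting applied to the word `w`. -/
def PSpiles (w : List ℕ) : List (List ℕ) :=
  w.foldl (fun ps c => PSinsert c ps) []

/-- The one-line word (with values `1,…,n`) of a permutation of `Fin n`. -/
def permWord {n : ℕ} (σ : Equiv.Perm (Fin n)) : List ℕ :=
  List.ofFn fun i => (σ i : ℕ) + 1

/-- `AllowedInterchange σ τ`: `τ` is obtained from `σ` by swapping the adjacent entries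
`σ(j), σ(j+1)` of an occurrence `i < j` of the generalized pattern 2-31
(`σ(j+1) < σ(i) < σ(j)`) that is not contained in any occurrence of 3-1-42
(there is no `k` with `i < k < j` and `σ(k) < σ(j+1)`). -/
def AllowedInterchange {n : ℕ} (σ τ : Equiv.Perm (Fin n)) : Prop :=
  ∃ (i j : ℕ) (hi : i < n) (hj : j + 1 < n),
    i < j ∧
    σ ⟨j + 1, hj⟩ < σ ⟨i, hi⟩ ∧ σ ⟨i, hi⟩ < σ ⟨j, Nat.lt_of_succ_lt hj⟩ ∧
    (¬ ∃ (k : ℕ) (hk : k < n), i < k ∧ k < j ∧ σ ⟨k, hk⟩ < σ ⟨j + 1, hj⟩) ∧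
    τ = σ * Equiv.swap ⟨j, Nat.lt_of_succ_lt hj⟩ ⟨j + 1, hj⟩

/-- A pile in `ps` either survives unchanged in `PSinsert c ps` or gets `c` stacked
on it (in which case `c` is smaller than its old top). -/
lemma PSinsert_mem {c : ℕ} {ps : List (List ℕ)} {p : List ℕ} (hp : p ∈ ps) :
    ∃ p' ∈ PSinsert c ps, p' = p ∨ (c < p.headI ∧ p' = c :: p) := by
  induction ps with
  | nil => simp at hp
  | cons q ps ih =>
    match q with
    | [] =>
      rcases List.mem_cons.mp hp with rfl | hp
      · exact ⟨[], by simp [PSinsert], Or.inl rfl⟩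
      · obtain ⟨p', h1, h2⟩ := ih hp
        exact ⟨p', by simp [PSinsert, h1], h2⟩
    | x :: q =>
      rcases List.mem_cons.mp hp with rfl | hp
      · by_cases hcx : c < x
        · exact ⟨c :: x :: q, by simp [PSinsert, hcx], Or.inr ⟨by simpa using hcx, rfl⟩⟩
        · exact ⟨x :: q, by simp [PSinsert, hcx], Or.inl rfl⟩
      · by_cases hcx : c < x
        · exact ⟨p, by simp [PSinsert, hcx, hp], Or.inl rfl⟩
        · obtain ⟨p', h1, h2⟩ := ih hp
          exact ⟨p', by simp [PSinsert, hcx, h1], h2⟩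

/-- The freshly inserted card is the top of some pile. -/
lemma PSinsert_head (c : ℕ) (ps : List (List ℕ)) :
    ∃ p ∈ PSinsert c ps, p.headI = c := by
  induction ps with
  | nil => exact ⟨[c], by simp [PSinsert]⟩
  | cons q ps ih =>
    match q with
    | [] =>
      obtain ⟨p, h1, h2⟩ := ih
      exact ⟨p, by simp [PSinsert, h1], h2⟩
    | x :: q =>
      by_cases hcx : c < x
      · exact ⟨c :: x :: q, by simp [PSinsert, hcx]⟩
      · obtain ⟨p, h1, h2⟩ := ih
        exact ⟨p, by simp [PSinsert, hcx, h1], h2⟩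

/-- Every pile top after an insertion is either `c` or an old pile top. -/
lemma PSinsert_heads (c : ℕ) (ps : List (List ℕ)) :
    ∀ t ∈ (PSinsert c ps).map List.headI, t = c ∨ t ∈ ps.map List.headI := by
  induction ps with
  | nil => simp [PSinsert]
  | cons q ps ih =>
    match q with
    | [] =>
      intro t ht
      simp only [PSinsert, List.map_cons, List.mem_cons] at ht ⊢
      rcases ht with h | h
      · exact Or.inr (Or.inl h)
      · rcases ih t (by simpa using h) with h' | h'
        · exact Or.inl h'
        · exact Or.inr (Or.inr h')
    | x :: q =>
      intro t ht
      by_cases hcx : c < x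
      · simp only [PSinsert, if_pos hcx, List.map_cons, List.mem_cons] at ht ⊢
        rcases ht with h | h
        · exact Or.inl (by simpa using h)
        · exact Or.inr (Or.inr h)
      · simp only [PSinsert, if_neg hcx, List.map_cons, List.mem_cons] at ht ⊢
        rcases ht with h | h
        · exact Or.inr (Or.inl h)
        · rcases ih t (by simpa using h) with h' | h'
          · exact Or.inl h'
          · exact Or.inr (Or.inr h')

/-- Insertion preserves the (weak) left-to-right monotonicity of pile tops. -/
lemma PSinsert_pairwise (c : ℕ) (ps : List (List ℕ))
    (h : (ps.map List.headI).Pairwise (· ≤ ·)) :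
    ((PSinsert c ps).map List.headI).Pairwise (· ≤ ·) := by
  induction ps with
  | nil => simp [PSinsert]
  | cons q ps ih =>
    match q with
    | [] =>
      simp only [PSinsert, List.map_cons, List.pairwise_cons] at h ⊢
      refine ⟨?_, ih h.2⟩
      intro t ht
      simp
    | x :: q =>
      by_cases hcx : c < x
      · simp only [PSinsert, if_pos hcx, List.map_cons, List.headI_cons,
          List.pairwise_cons] at h ⊢
        exact ⟨fun t ht => le_of_lt (lt_of_lt_of_le hcx (h.1 t ht)), h.2⟩
      · simp only [PSinsert, if_neg hcx, List.map_cons, List.headI_cons,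
          List.pairwise_cons] at h ⊢
        refine ⟨?_, ih h.2⟩
        intro t ht
        rcases PSinsert_heads c ps t ht with rfl | h'
        · omega
        · exact h.1 t h'

/-- A witness pile with small top whose top comes from the allowed set `S`
survives an entire fold. -/
lemma PSfold_witness (v : ℕ) (S : List ℕ) :
    ∀ (l : List ℕ), (∀ c ∈ l, c ∈ S) →
    ∀ ps : List (List ℕ), (∃ p ∈ ps, p.headI ≤ v ∧ p.headI ∈ S) →
    ∃ p ∈ l.foldl (fun ps c => PSinsert c ps) ps, p.headI ≤ v ∧ p.headI ∈ S := by
  intro l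
  induction l with
  | nil => intro _ ps h; exact h
  | cons c l ih =>
    rintro hS ps ⟨p, hp, hle, hmem⟩
    apply ih (fun x hx => hS x (List.mem_cons_of_mem _ hx))
    obtain ⟨p', hp', hcase⟩ := PSinsert_mem (c := c) hp
    rcases hcase with rfl | ⟨hlt, rfl⟩
    · exact ⟨p', hp', hle, hmem⟩
    · exact ⟨c :: p, hp', by simp only [List.headI_cons]; omega,
        by simpa using hS c (List.mem_cons_self)⟩

lemma PSfold_pairwise : ∀ (l : List ℕ) (ps : List (List ℕ)),
    (ps.map List.headI).Pairwise (· ≤ ·) →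
    (((l.foldl (fun ps c => PSinsert c ps) ps).map List.headI)).Pairwise (· ≤ ·) := by
  intro l
  induction l with
  | nil => intro ps h; exact h
  | cons c l ih => intro ps h; exact ih _ (PSinsert_pairwise c ps h)

lemma PSpiles_pairwise (w : List ℕ) :
    ((PSpiles w).map List.headI).Pairwise (· ≤ ·) :=
  PSfold_pairwise w [] (by simp)

/-- The key commutation: if `b < a` and some pile top lies strictly between them,
then inserting `a` then `b` gives the same piles as inserting `b` then `a`. -/
lemma PS_comm (b a : ℕ) (hba : b < a) :
    ∀ ps : List (List ℕ),
    (ps.map List.headI).Pairwise (· ≤ ·) →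
    (∃ p ∈ ps, b < p.headI ∧ p.headI < a) →
    PSinsert b (PSinsert a ps) = PSinsert a (PSinsert b ps) := by
  intro ps
  induction ps with
  | nil => rintro _ ⟨p, hp, _⟩; simp at hp
  | cons q ps ih =>
    intro hpw hex
    match q with
    | [] =>
      have hex' : ∃ p ∈ ps, b < p.headI ∧ p.headI < a := by
        obtain ⟨p, hp, h1, h2⟩ := hex
        rcases List.mem_cons.mp hp with rfl | hp
        · simp [List.headI] at h1
        · exact ⟨p, hp, h1, h2⟩
      have hpw' : (ps.map List.headI).Pairwise (· ≤ ·) := by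
        simp only [List.map_cons, List.pairwise_cons] at hpw
        exact hpw.2
      simp only [PSinsert, ih hpw' hex']
    | x :: q =>
      by_cases hbx : b < x
      · have hxa : x < a := by
          obtain ⟨p, hp, h1, h2⟩ := hex
          rcases List.mem_cons.mp hp with rfl | hp
          · simpa using h2
          · have hx : x ≤ p.headI := by
              simp only [List.map_cons, List.headI_cons, List.pairwise_cons] at hpw
              exact hpw.1 _ (List.mem_map_of_mem hp)
            omega
        have hax : ¬ a < x := by omega
        have hab : ¬ a < b := by omega
        simp only [PSinsert, if_neg hax, if_pos hbx, if_neg hab]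
      · have hax : ¬ a < x := by omega
        have hex' : ∃ p ∈ ps, b < p.headI ∧ p.headI < a := by
          obtain ⟨p, hp, h1, h2⟩ := hex
          rcases List.mem_cons.mp hp with rfl | hp
          · simp only [List.headI_cons] at h1; omega
          · exact ⟨p, hp, h1, h2⟩
        have hpw' : (ps.map List.headI).Pairwise (· ≤ ·) := by
          simp only [List.map_cons, List.pairwise_cons] at hpw
          exact hpw.2
        simp only [PSinsert, if_neg hbx, if_neg hax, ih hpw' hex']

lemma split2 (l : List ℕ) (j : ℕ) (h : j + 1 < l.length) :
    l = l.take j ++ l[j] :: l[j + 1] :: l.drop (j + 2) := by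
  conv_lhs => rw [← List.take_append_drop j l]
  rw [List.drop_eq_getElem_cons (by omega), List.drop_eq_getElem_cons (by omega)]

lemma permWord_length {n : ℕ} (σ : Equiv.Perm (Fin n)) : (permWord σ).length = n := by
  simp [permWord]

lemma permWord_getElem {n : ℕ} (σ : Equiv.Perm (Fin n)) (m : ℕ) (hm : m < n) :
    (permWord σ)[m]'(by simp [permWord_length, hm]) = (σ ⟨m, hm⟩ : ℕ) + 1 := by
  simp [permWord]


/-- A single allowed interchange preserves the pile configuration under
Patience Sorting: if `τ` is obtained from `σ` by an allowed interchange then `R(τ) = R(σ)`. -/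
theorem stmt7 (n : ℕ) (σ τ : Equiv.Perm (Fin n)) (h : AllowedInterchange σ τ) :
    PSpiles (permWord τ) = PSpiles (permWord σ) := by
  obtain ⟨i, j, hi, hj, hij, hblt, halt, hno, rfl⟩ := h
  have hjn : j < n := Nat.lt_of_succ_lt hj
  set T : Equiv.Perm (Fin n) := σ * Equiv.swap ⟨j, Nat.lt_of_succ_lt hj⟩ ⟨j + 1, hj⟩ with hT
  set a' : ℕ := (σ ⟨j, hjn⟩ : ℕ) + 1 with ha'
  set b' : ℕ := (σ ⟨j + 1, hj⟩ : ℕ) + 1 with hb'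
  have hba : b' < a' := by
    have h1 : (σ ⟨j + 1, hj⟩ : ℕ) < (σ ⟨i, hi⟩ : ℕ) := hblt
    have h2 : (σ ⟨i, hi⟩ : ℕ) < (σ ⟨j, hjn⟩ : ℕ) := halt
    omega
  have hlenσ : j + 1 < (permWord σ).length := by rw [permWord_length]; omega
  have hlenT : j + 1 < (permWord T).length := by rw [permWord_length]; omega
  -- entries of T
  have hTj : (permWord T)[j]'(by omega) = b' := by
    rw [permWord_getElem T j hjn, hb', hT]
    simp [Equiv.Perm.mul_apply]
  have hTj1 : (permWord T)[j + 1]'(by omega) = a' := by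
    rw [permWord_getElem T (j + 1) hj, ha', hT]
    simp [Equiv.Perm.mul_apply]
  have hTother : ∀ m (hm : m < n), m ≠ j → m ≠ j + 1 →
      (T ⟨m, hm⟩ : ℕ) = (σ ⟨m, hm⟩ : ℕ) := by
    intro m hm h1 h2
    rw [hT]
    simp only [Equiv.Perm.mul_apply]
    rw [Equiv.swap_apply_of_ne_of_ne (by simp [Fin.ext_iff, h1]) (by simp [Fin.ext_iff, h2])]
  have htake : (permWord T).take j = (permWord σ).take j := by
    apply List.ext_getElem
    · simp [permWord_length]
    · intro m h1 h2
      have hm : m < n := by simp [permWord_length] at h1; omega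
      have hmj : m < j := by simp [permWord_length] at h1; omega
      rw [List.getElem_take, List.getElem_take, permWord_getElem T m hm,
        permWord_getElem σ m hm, hTother m hm (by omega) (by omega)]
  have hdrop : (permWord T).drop (j + 2) = (permWord σ).drop (j + 2) := by
    apply List.ext_getElem
    · simp [permWord_length]
    · intro m h1 h2
      have hm : j + 2 + m < n := by simp [permWord_length] at h1; omega
      rw [List.getElem_drop, List.getElem_drop, permWord_getElem T _ hm,
        permWord_getElem σ _ hm, hTother _ hm (by omega) (by omega)]
  have hdσ : permWord σ = (permWord σ).take j ++ a' :: b' :: (permWord σ).drop (j + 2) := by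
    conv_lhs => rw [split2 (permWord σ) j hlenσ]
    rw [permWord_getElem σ j hjn, permWord_getElem σ (j + 1) hj]
  have hdT : permWord T = (permWord σ).take j ++ b' :: a' :: (permWord σ).drop (j + 2) := by
    conv_lhs => rw [split2 (permWord T) j hlenT]
    rw [htake, hdrop, hTj, hTj1]
  set L1 := (permWord σ).take j with hL1
  -- the witness pile in PSpiles L1
  have hiL : i < L1.length := by
    simp only [hL1, List.length_take, permWord_length]; omega
  have hLi : L1[i]'hiL = (σ ⟨i, hi⟩ : ℕ) + 1 := by
    simp only [hL1, List.getElem_take]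
    exact permWord_getElem σ i hi
  have hex : ∃ p ∈ L1.foldl (fun ps c => PSinsert c ps) [],
      b' < p.headI ∧ p.headI < a' := by
    have hstart : ∃ p ∈ PSinsert (L1[i]'hiL) ((L1.take i).foldl (fun ps c => PSinsert c ps) []),
        p.headI ≤ (σ ⟨i, hi⟩ : ℕ) + 1 ∧ p.headI ∈ (L1[i]'hiL) :: L1.drop (i + 1) := by
      obtain ⟨p, h1, h2⟩ := PSinsert_head (L1[i]'hiL) ((L1.take i).foldl (fun ps c => PSinsert c ps) [])
      exact ⟨p, h1, by rw [h2, hLi], by rw [h2]; exact List.mem_cons_self⟩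
    have hfold := PSfold_witness ((σ ⟨i, hi⟩ : ℕ) + 1) ((L1[i]'hiL) :: L1.drop (i + 1))
      (L1.drop (i + 1)) (fun c hc => List.mem_cons_of_mem _ hc) _ hstart
    have hfl : (L1.drop (i + 1)).foldl (fun ps c => PSinsert c ps)
        (PSinsert (L1[i]'hiL) ((L1.take i).foldl (fun ps c => PSinsert c ps) []))
        = L1.foldl (fun ps c => PSinsert c ps) [] := by
      conv_rhs =>
        rw [show L1 = L1.take i ++ L1[i] :: L1.drop (i + 1) by
          conv_lhs => rw [← List.take_append_drop i L1]
          rw [List.drop_eq_getElem_cons hiL]]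
      rw [List.foldl_append, List.foldl_cons]
    rw [hfl] at hfold
    obtain ⟨p, hp, hle, hmem⟩ := hfold
    refine ⟨p, hp, ?_, ?_⟩
    · rcases List.mem_cons.mp hmem with he | hmem'
      · rw [he, hLi, hb']
        have h1 : (σ ⟨j + 1, hj⟩ : ℕ) < (σ ⟨i, hi⟩ : ℕ) := hblt
        omega
      · obtain ⟨m, hm, hme⟩ := List.mem_iff_getElem.mp hmem'
        have hkj : i + 1 + m < j := by
          simp only [hL1, List.length_drop, List.length_take, permWord_length] at hm
          omega
        have hkn : i + 1 + m < n := by omega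
        have hpv : p.headI = (σ ⟨i + 1 + m, hkn⟩ : ℕ) + 1 := by
          rw [← hme]
          simp only [hL1, List.getElem_drop, List.getElem_take]
          exact permWord_getElem σ (i + 1 + m) hkn
        push_neg at hno
        have h1 : σ ⟨j + 1, hj⟩ ≤ σ ⟨i + 1 + m, hkn⟩ := hno (i + 1 + m) hkn (by omega) hkj
        have h2 : σ ⟨i + 1 + m, hkn⟩ ≠ σ ⟨j + 1, hj⟩ := by
          intro he
          have := σ.injective he
          simp only [Fin.mk.injEq] at this
          omega
        have h3 : (σ ⟨j + 1, hj⟩ : ℕ) < (σ ⟨i + 1 + m, hkn⟩ : ℕ) := by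
          rw [Fin.le_def] at h1
          have h4 : (σ ⟨i + 1 + m, hkn⟩ : ℕ) ≠ (σ ⟨j + 1, hj⟩ : ℕ) := fun hc => h2 (Fin.ext hc)
          omega
        rw [hpv, hb']
        omega
    · have h2 : (σ ⟨i, hi⟩ : ℕ) < (σ ⟨j, hjn⟩ : ℕ) := halt
      rw [ha']
      omega
  -- conclude
  conv_lhs => rw [hdT]
  conv_rhs => rw [hdσ]
  simp only [PSpiles, List.foldl_append, List.foldl_cons]
  congr 1
  exact (PS_comm b' a' hba (L1.foldl (fun ps c => PSinsert c ps) [])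
    (PSpiles_pairwise L1) hex).symm
end

section
/- Every permutation σ of {1,…,n} can be transformed into the reverse patience word RPW(R(σ)) of its pile configuration by a finite sequence of allowed interchanges, each of which preserves the pile configuration. -/
/-- The reverse patience word of a pile configuration: concatenate the piles
left to right, each pile written in decreasing order (bottom to top). -/
def RPW (P : List (List ℕ)) : List ℕ := (P.map List.reverse).flatten


section Aux






/-- index of the pile that `c` would be placed on (length if new pile) -/
def pileIdx (c : ℕ) : List (List ℕ) → ℕ
  | [] => 0
  | q :: ps => if c < q.headI then 0 else pileIdx c ps + 1

lemma PSinsert_skip (c : ℕ) : ∀ (R Z : List (List ℕ)),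
    (∀ q ∈ R, ¬ (c < q.headI)) → PSinsert c (R ++ Z) = R ++ PSinsert c Z := by
  intro R
  induction R with
  | nil => intro Z _; rfl
  | cons q R ih =>
    intro Z h
    have hq := h q (by simp)
    match q with
    | [] => simp only [List.cons_append, PSinsert, List.append_eq]; rw [ih Z (fun q hq => h q (by simp [hq]))]
    | x :: p =>
      simp only [List.headI] at hq
      simp only [List.cons_append, PSinsert, if_neg hq, List.append_eq]
      rw [ih Z (fun q hq => h q (by simp [hq]))]

lemma PSinsert_hit (c : ℕ) (R : List (List ℕ)) (x : ℕ) (p : List ℕ) (Z : List (List ℕ))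
    (hR : ∀ q ∈ R, ¬ (c < q.headI)) (hx : c < x) :
    PSinsert c (R ++ (x :: p) :: Z) = R ++ (c :: x :: p) :: Z := by
  rw [PSinsert_skip c R _ hR]
  simp [PSinsert, if_pos hx]

lemma pileIdx_skip (c : ℕ) : ∀ (R Z : List (List ℕ)),
    (∀ q ∈ R, ¬ (c < q.headI)) → pileIdx c (R ++ Z) = R.length + pileIdx c Z := by
  intro R
  induction R with
  | nil => intro Z _; simp
  | cons q R ih =>
    intro Z h
    have hq := h q (by simp)
    simp only [List.cons_append, List.append_eq, pileIdx, if_neg hq, ih Z (fun q hq => h q (by simp [hq])),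
      List.length_cons]
    omega

lemma pileIdx_hit (c : ℕ) (R : List (List ℕ)) (r : List ℕ) (Z : List (List ℕ))
    (hR : ∀ q ∈ R, ¬ (c < q.headI)) (hx : c < r.headI) :
    pileIdx c (R ++ r :: Z) = R.length := by
  rw [pileIdx_skip c R _ hR]
  simp [pileIdx, if_pos hx]

/-- key commutation lemma -/
lemma PSinsert_comm (c x : ℕ) : ∀ Q : List (List ℕ), pileIdx c Q < pileIdx x Q →
    PSinsert c (PSinsert x Q) = PSinsert x (PSinsert c Q) := by
  intro Q
  induction Q with
  | nil => intro h; simp [pileIdx] at h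
  | cons q Q ih =>
    intro h
    match q with
    | [] =>
      simp only [pileIdx, List.headI] at h
      simp only [show (default:ℕ) = 0 from rfl, if_neg (by omega : ¬ c < 0), if_neg (by omega : ¬ x < 0)] at h
      show [] :: PSinsert c (PSinsert x Q) = [] :: PSinsert x (PSinsert c Q)
      rw [ih (by omega)]
    | y :: p =>
      simp only [pileIdx, List.headI] at h
      by_cases hc : c < y
      · simp only [hc, if_true] at h
        by_cases hx' : x < y
        · simp [hx'] at h
        · simp only [PSinsert, if_neg hx', if_pos hc]
          have hxc : ¬ (x < c) := by omega
          simp [PSinsert, if_neg hxc]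
      · simp only [hc, if_false] at h
        have hx' : ¬ (x < y) := by
          intro hx'
          simp [hx'] at h
        simp only [hx', if_false] at h
        simp only [PSinsert, if_neg hc, if_neg hx']
        rw [ih (by omega)]

def ValidP (P : List (List ℕ)) : Prop :=
  (∀ q ∈ P, q ≠ []) ∧ (∀ q ∈ P, List.Pairwise (· < ·) q) ∧
    List.Pairwise (· < ·) (P.map (·.headI))

lemma validP_nil : ValidP [] := by simp [ValidP]

lemma flatten_PSinsert (c : ℕ) : ∀ P : List (List ℕ),
    List.Perm (PSinsert c P).flatten (c :: P.flatten) := by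
  intro P
  induction P with
  | nil => simp [PSinsert]
  | cons q P ih =>
    match q with
    | [] =>
      show List.Perm ([] :: PSinsert c P).flatten _
      simpa using ih
    | x :: p =>
      by_cases hc : c < x
      · show List.Perm ((if c < x then (c :: x :: p) :: P else _)).flatten _
        rw [if_pos hc]; simp
      · show List.Perm ((if c < x then _ else (x :: p) :: PSinsert c P)).flatten _
        rw [if_neg hc]
        simp only [List.flatten_cons]
        refine ((ih).append_left (x :: p)).trans ?_
        exact List.perm_middle

lemma flatten_PSpiles : ∀ w : List ℕ, List.Perm (PSpiles w).flatten w := by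
  intro w
  induction w using List.reverseRecOn with
  | nil => simp [PSpiles]
  | append_singleton u c ih =>
    have : PSpiles (u ++ [c]) = PSinsert c (PSpiles u) := by
      simp [PSpiles, List.foldl_append]
    rw [this]
    refine (flatten_PSinsert c _).trans ?_
    refine ((ih).cons c).trans ?_
    exact (List.perm_append_singleton c u).symm

lemma heads_PSinsert (c : ℕ) : ∀ P : List (List ℕ), ∀ h ∈ (PSinsert c P).map (·.headI),
    h = c ∨ h ∈ P.map (·.headI) := by
  intro P
  induction P with
  | nil => simp [PSinsert]
  | cons q P ih =>
    match q with
    | [] =>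
      intro h hh
      show _ ∨ h ∈ [].headI :: _
      have : (PSinsert c ([] :: P)).map (·.headI) = [].headI :: (PSinsert c P).map (·.headI) := rfl
      rw [this] at hh
      rcases List.mem_cons.1 hh with hh | hh
      · right; simp [hh]
      · rcases ih h hh with h1 | h1
        · left; exact h1
        · right; simp only [List.map_cons, List.mem_cons]; right; exact h1
    | x :: p =>
      intro h hh
      by_cases hc : c < x
      · have : PSinsert c ((x :: p) :: P) = (c :: x :: p) :: P := by
          show (if c < x then _ else _) = _; rw [if_pos hc]
        rw [this] at hh
        simp only [List.map_cons, List.mem_cons] at hh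
        rcases hh with hh | hh
        · left; exact hh
        · right; simp only [List.map_cons, List.mem_cons]; right; exact hh
      · have : PSinsert c ((x :: p) :: P) = (x :: p) :: PSinsert c P := by
          show (if c < x then _ else _) = _; rw [if_neg hc]
        rw [this] at hh
        simp only [List.map_cons, List.mem_cons] at hh
        rcases hh with hh | hh
        · right; simp [hh]
        · rcases ih h hh with h1 | h1
          · left; exact h1
          · right; simp only [List.map_cons, List.mem_cons]; right; exact h1

lemma validP_PSinsert (c : ℕ) : ∀ P : List (List ℕ), ValidP P → c ∉ P.flatten →
    ValidP (PSinsert c P) := by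
  intro P
  induction P with
  | nil => intro _ _; constructor
           · simp [PSinsert]
           · constructor <;> simp [PSinsert]
  | cons q P ih =>
    rintro ⟨hne, hsort, hheads⟩ hc
    have hqne : q ≠ [] := hne q (by simp)
    match q, hqne with
    | x :: p, _ =>
      simp only [List.flatten_cons, List.mem_append, not_or, List.mem_cons] at hc
      by_cases hcx : c < x
      · have he : PSinsert c ((x :: p) :: P) = (c :: x :: p) :: P := by
          show (if c < x then _ else _) = _; rw [if_pos hcx]
        rw [he]
        have hsxp : List.Pairwise (· < ·) (x :: p) := hsort _ (by simp)
        refine ⟨?_, ?_, ?_⟩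
        · intro q hq; rcases List.mem_cons.1 hq with h | h
          · simp [h]
          · exact hne q (by simp [h])
        · intro q hq; rcases List.mem_cons.1 hq with h | h
          · subst h
            refine List.pairwise_cons.2 ⟨?_, hsxp⟩
            intro b hb
            rcases List.mem_cons.1 hb with h | h
            · omega
            · have := (List.pairwise_cons.1 hsxp).1 b h; omega
          · exact hsort q (by simp [h])
        · simp only [List.map_cons] at hheads ⊢
          rw [List.pairwise_cons] at hheads ⊢
          refine ⟨?_, hheads.2⟩
          intro b hb
          have := hheads.1 b hb
          simp only [List.headI] at this ⊢
          omega
      · have he : PSinsert c ((x :: p) :: P) = (x :: p) :: PSinsert c P := by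
          show (if c < x then _ else _) = _; rw [if_neg hcx]
        rw [he]
        have hvP : ValidP P := ⟨fun q hq => hne q (by simp [hq]),
          fun q hq => hsort q (by simp [hq]),
          (List.pairwise_cons.1 (by simpa using hheads)).2⟩
        have hcP : c ∉ P.flatten := fun h => hc.2 h
        obtain ⟨h1, h2, h3⟩ := ih hvP hcP
        have hxc : x < c := by
          rcases Nat.lt_or_ge x c with h | h
          · exact h
          · exfalso; have : x = c := by omega
            exact hc.1.1 this.symm
        refine ⟨?_, ?_, ?_⟩
        · intro q hq; rcases List.mem_cons.1 hq with h | h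
          · simp [h]
          · exact h1 q h
        · intro q hq; rcases List.mem_cons.1 hq with h | h
          · subst h; exact hsort _ (by simp)
          · exact h2 q h
        · simp only [List.map_cons]
          rw [List.pairwise_cons]
          refine ⟨?_, h3⟩
          intro b hb
          rcases heads_PSinsert c P b hb with h | h
          · simp only [List.headI]; omega
          · have := (List.pairwise_cons.1 (by simpa using hheads)).1 b h
            simpa using this

lemma validP_PSpiles : ∀ w : List ℕ, w.Nodup → ValidP (PSpiles w) := by
  intro w
  induction w using List.reverseRecOn with
  | nil => intro _; exact validP_nil
  | append_singleton u c ih =>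
    intro hnd
    have hu : u.Nodup := hnd.sublist (by simp)
    have hcu : c ∉ u := by
      intro h
      have := List.nodup_append.1 hnd
      exact this.2.2 c h c (by simp) rfl
    have : PSpiles (u ++ [c]) = PSinsert c (PSpiles u) := by
      simp [PSpiles, List.foldl_append]
    rw [this]
    refine validP_PSinsert c _ (ih hu) ?_
    intro h
    exact hcu ((flatten_PSpiles u).mem_iff.1 h)


lemma RPW_append (P Q : List (List ℕ)) : RPW (P ++ Q) = RPW P ++ RPW Q := by
  simp [RPW]

lemma RPW_nil : RPW [] = [] := rfl

lemma PSpiles_append (u v : List ℕ) :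
    PSpiles (u ++ v) = v.foldl (fun ps c => PSinsert c ps) (PSpiles u) := by
  simp [PSpiles, List.foldl_append]

lemma validP_prefix (P Q : List (List ℕ)) (h : ValidP (P ++ Q)) : ValidP P := by
  obtain ⟨h1, h2, h3⟩ := h
  refine ⟨fun q hq => h1 q (by simp [hq]), fun q hq => h2 q (by simp [hq]), ?_⟩
  rw [List.map_append] at h3
  exact (List.pairwise_append.1 h3).1

/-- replay a single pile -/
lemma replay_pile : ∀ (r : List ℕ) (P₀ : List (List ℕ)), r ≠ [] →
    List.Pairwise (· < ·) r → (∀ q ∈ P₀, q.headI < r.headI) →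
    r.reverse.foldl (fun ps c => PSinsert c ps) P₀ = P₀ ++ [r] := by
  intro r
  induction r with
  | nil => intro _ h; exact absurd rfl h
  | cons a r' ih =>
    intro P₀ _ hsort hheads
    have hrev : (a :: r').reverse = r'.reverse ++ [a] := by simp
    rw [hrev, List.foldl_append]
    match r' with
    | [] =>
      simp only [List.reverse_nil, List.foldl_nil, List.foldl_cons]
      have : PSinsert a (P₀ ++ []) = P₀ ++ PSinsert a [] := by
        refine PSinsert_skip a P₀ [] ?_
        intro q hq
        have := hheads q hq
        simp only [List.headI] at this ⊢
        omega
      simpa [PSinsert] using this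
    | b :: r'' =>
      have hs' : List.Pairwise (· < ·) (b :: r'') := (List.pairwise_cons.1 hsort).2
      have hab : a < b := (List.pairwise_cons.1 hsort).1 b (by simp)
      have hh' : ∀ q ∈ P₀, q.headI < (b :: r'').headI := by
        intro q hq
        have := hheads q hq
        simp only [List.headI] at this ⊢
        omega
      rw [ih P₀ (by simp) hs' hh']
      simp only [List.foldl_cons, List.foldl_nil]
      refine PSinsert_hit a P₀ b r'' [] ?_ hab
      intro q hq
      have := hheads q hq
      simp only [List.headI] at this ⊢
      omega

/-- the reverse patience word of a valid pile configuration replays to the same piles -/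
lemma replay (P : List (List ℕ)) (h : ValidP P) : PSpiles (RPW P) = P := by
  induction P using List.reverseRecOn with
  | nil => rfl
  | append_singleton P₀ r ih =>
    have hP₀ : ValidP P₀ := validP_prefix P₀ [r] h
    rw [RPW_append, PSpiles_append, ih hP₀]
    simp only [RPW, List.map_cons, List.map_nil, List.flatten_cons, List.flatten_nil,
      List.append_nil]
    refine replay_pile r P₀ (h.1 r (by simp)) (h.2.1 r (by simp)) ?_
    intro q hq
    have h3 := h.2.2
    rw [List.map_append] at h3
    have := (List.pairwise_append.1 h3).2.2 q.headI (by simp; exact ⟨q, hq, rfl⟩) r.headI (by simp)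
    exact this

lemma decomp (c : ℕ) : ∀ P : List (List ℕ),
    (∀ q ∈ P, ¬ c < q.headI) ∨
    ∃ R' r G, P = R' ++ r :: G ∧ c < r.headI ∧ ∀ q ∈ R', ¬ c < q.headI := by
  intro P
  induction P with
  | nil => left; simp
  | cons q P ih =>
    by_cases hc : c < q.headI
    · right; exact ⟨[], q, P, by simp, hc, by simp⟩
    · rcases ih with h | ⟨R', r, G, hP, hr, hR'⟩
      · left; intro q' hq'
        rcases List.mem_cons.1 hq' with h' | h'
        · subst h'; exact hc
        · exact h q' h'
      · right
        refine ⟨q :: R', r, G, by simp [hP], hr, ?_⟩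
        intro q' hq'
        rcases List.mem_cons.1 hq' with h' | h'
        · subst h'; exact hc
        · exact hR' q' h'

lemma headI_le_of_mem {q : List ℕ} (hs : List.Pairwise (· < ·) q) {e : ℕ} (he : e ∈ q) :
    q.headI ≤ e := by
  match q with
  | a :: q' =>
    rcases List.mem_cons.1 he with h | h
    · simp [h]
    · have := (List.pairwise_cons.1 hs).1 e h
      simp only [List.headI]
      omega

lemma foldl_skip (R : List (List ℕ)) : ∀ (E : List ℕ) (Z : List (List ℕ)),
    (∀ e ∈ E, ∀ q ∈ R, ¬ e < q.headI) →
    E.foldl (fun ps c => PSinsert c ps) (R ++ Z) =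
      R ++ E.foldl (fun ps c => PSinsert c ps) Z := by
  intro E
  induction E with
  | nil => intro Z _; rfl
  | cons e E ih =>
    intro Z h
    simp only [List.foldl_cons]
    rw [PSinsert_skip e R Z (h e (by simp))]
    exact ih _ (fun e' he' => h e' (by simp [he']))

section PermWordLemmas

variable {n : ℕ}

lemma length_permWord (σ : Equiv.Perm (Fin n)) : (permWord σ).length = n := by
  simp [permWord]

lemma getElem_permWord (σ : Equiv.Perm (Fin n)) (k : ℕ) (hk : k < n) :
    (permWord σ)[k]'(by rw [length_permWord]; exact hk) = (σ ⟨k, hk⟩ : ℕ) + 1 := by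
  simp [permWord]

lemma swapword (σ : Equiv.Perm (Fin n)) (A : List ℕ) (x c : ℕ) (B : List ℕ)
    (hj : A.length + 1 < n)
    (h : permWord σ = A ++ x :: c :: B) :
    permWord (σ * Equiv.swap ⟨A.length, Nat.lt_of_succ_lt hj⟩ ⟨A.length + 1, hj⟩)
      = A ++ c :: x :: B := by
  have hlen : n = A.length + 2 + B.length := by
    have := length_permWord σ
    rw [h] at this
    simp at this
    omega
  have hw : ∀ (m : ℕ) (hm : m < n),
      (σ ⟨m, hm⟩ : ℕ) + 1 = (A ++ x :: c :: B)[m]'(by simp; omega) := by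
    intro m hm
    rw [← getElem_permWord σ m hm]
    exact List.getElem_of_eq h _
  apply List.ext_getElem
  · rw [length_permWord]; simp; omega
  · intro k hk1 hk2
    rw [length_permWord] at hk1
    rw [getElem_permWord _ k hk1, Equiv.Perm.mul_apply]
    rcases Nat.lt_trichotomy k A.length with hkj | hkj | hkj
    · rw [Equiv.swap_apply_of_ne_of_ne
        (by simp only [ne_eq, Fin.mk.injEq]; omega)
        (by simp only [ne_eq, Fin.mk.injEq]; omega)]
      rw [hw k hk1]
      rw [List.getElem_append_left hkj, List.getElem_append_left hkj]
    · have heq : Equiv.swap (⟨A.length, Nat.lt_of_succ_lt hj⟩ : Fin n) ⟨A.length + 1, hj⟩ ⟨k, hk1⟩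
          = ⟨A.length + 1, hj⟩ := by
        rw [show (⟨k, hk1⟩ : Fin n) = ⟨A.length, Nat.lt_of_succ_lt hj⟩ from Fin.ext hkj]
        exact Equiv.swap_apply_left _ _
      rw [heq, hw (A.length + 1) hj]
      rw [List.getElem_append_right (by omega), List.getElem_append_right (by omega)]
      have e1 : A.length + 1 - A.length = 1 := by omega
      have e2 : k - A.length = 0 := by omega
      simp [e1, e2]
    · rcases Nat.lt_or_ge k (A.length + 2) with hkj2 | hkj2
      · have hk' : k = A.length + 1 := by omega
        have heq : Equiv.swap (⟨A.length, Nat.lt_of_succ_lt hj⟩ : Fin n) ⟨A.length + 1, hj⟩ ⟨k, hk1⟩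
            = ⟨A.length, Nat.lt_of_succ_lt hj⟩ := by
          rw [show (⟨k, hk1⟩ : Fin n) = ⟨A.length + 1, hj⟩ from Fin.ext hk']
          exact Equiv.swap_apply_right _ _
        rw [heq, hw A.length (by omega)]
        rw [List.getElem_append_right (Nat.le_refl _), List.getElem_append_right (by omega)]
        have e1 : A.length - A.length = 0 := by omega
        have e2 : k - A.length = 1 := by omega
        simp [e1, e2]
      · rw [Equiv.swap_apply_of_ne_of_ne
          (by simp only [ne_eq, Fin.mk.injEq]; omega)
          (by simp only [ne_eq, Fin.mk.injEq]; omega)]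
        rw [hw k hk1]
        rw [List.getElem_append_right (show A.length ≤ k by omega),
          List.getElem_append_right (show A.length ≤ k by omega)]
        obtain ⟨m', hm'⟩ : ∃ m', k - A.length = m' + 2 := ⟨k - A.length - 2, by omega⟩
        simp only [hm', List.getElem_cons_succ]

end PermWordLemmas

lemma word_entry {n : ℕ} (σ : Equiv.Perm (Fin n)) (L : List ℕ) (h : permWord σ = L)
    (m : ℕ) (hm : m < n) (hm2 : m < L.length) :
    (σ ⟨m, hm⟩ : ℕ) + 1 = L[m]'hm2 := by
  rw [← getElem_permWord σ m hm]
  exact List.getElem_of_eq h _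

lemma getLast?_getElem {L : List ℕ} {t : ℕ} (h : L.getLast? = some t)
    (hl : L.length - 1 < L.length) : L[L.length - 1]'hl = t := by
  match L, h with
  | L, h =>
    have hne : L ≠ [] := by rintro rfl; simp at h
    rw [List.getLast?_eq_getLast hne] at h
    rw [← List.getLast_eq_getElem hne]
    exact Option.some_injective _ h

section Bubble

variable {n : ℕ}

/-- The step relation. -/
def PSRel {n : ℕ} (a b : Equiv.Perm (Fin n)) : Prop :=
  AllowedInterchange a b ∧ PSpiles (permWord b) = PSpiles (permWord a)

lemma bubble (F : List ℕ) (c : ℕ) (R' : List (List ℕ)) (r : List ℕ)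
    (hF : PSpiles F = R' ++ [r])
    (hskip : ∀ q ∈ R', ¬ c < q.headI)
    (hct : c < r.headI)
    (hlast : F.getLast? = some r.headI) :
    ∀ (D₁ : List ℕ) (σ : Equiv.Perm (Fin n)) (D₂ : List ℕ),
      permWord σ = F ++ (D₁ ++ c :: D₂) →
      (∀ e ∈ D₁, r.headI < e) →
      ∃ τ, Relation.ReflTransGen PSRel σ τ ∧ permWord τ = F ++ (c :: (D₁ ++ D₂)) := by
  intro D₁
  induction D₁ using List.reverseRecOn with
  | nil =>
    intro σ D₂ hword _
    exact ⟨σ, Relation.ReflTransGen.refl, by simpa using hword⟩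
  | append_singleton E x ihE =>
    intro σ D₂ hword hD
    set t := r.headI with htdef
    have hxE : r.headI < x := hD x (by simp)
    have hE : ∀ e ∈ E, r.headI < e := fun e he => hD e (by simp [he])
    have hword2 : permWord σ = (F ++ E) ++ x :: c :: D₂ := by
      rw [hword]; simp
    have hn : n = (F ++ E).length + 2 + D₂.length := by
      have := length_permWord σ
      rw [hword2] at this
      simp only [List.length_append, List.length_cons] at this ⊢
      omega
    have hFE : (F ++ E).length = F.length + E.length := List.length_append
    have hFne : F ≠ [] := by rintro rfl; simp at hlast
    have hFpos : 0 < F.length := List.length_pos_iff.2 hFne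
    have hj : (F ++ E).length + 1 < n := by omega
    set j := (F ++ E).length with hjdef
    set τ' := σ * Equiv.swap ⟨j, Nat.lt_of_succ_lt hj⟩ ⟨j + 1, hj⟩ with hτ'
    have hword' : permWord τ' = (F ++ E) ++ c :: x :: D₂ :=
      swapword σ (F ++ E) x c D₂ hj hword2
    -- entries of the word of σ
    have hlen2 : (F ++ E ++ x :: c :: D₂).length = n := by
      simp only [List.length_append, List.length_cons] at hn ⊢
      omega
    have hvx : (σ ⟨j, Nat.lt_of_succ_lt hj⟩ : ℕ) + 1 = x := by
      rw [word_entry σ _ hword2 j (by omega) (by omega)]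
      rw [List.getElem_append_right (Nat.le_refl _)]
      simp
    have hvc : (σ ⟨j + 1, hj⟩ : ℕ) + 1 = c := by
      rw [word_entry σ _ hword2 (j+1) (by omega) (by omega)]
      rw [List.getElem_append_right (by omega)]
      have e1 : j + 1 - (F ++ E).length = 1 := by omega
      simp only [e1, List.getElem_cons_succ, List.getElem_cons_zero]
    have hi : F.length - 1 < n := by
      have : F.length ≤ (F ++ E).length := by simp
      omega
    have hiFE : F.length - 1 < (F ++ E).length := by
      have : F.length ≤ (F ++ E).length := by simp
      omega
    have hit : (σ ⟨F.length - 1, hi⟩ : ℕ) + 1 = t := by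
      rw [word_entry σ _ hword2 (F.length - 1) hi (by omega)]
      rw [List.getElem_append_left hiFE, List.getElem_append_left (by omega)]
      exact getLast?_getElem hlast (by omega)
    -- the allowed interchange
    have hallowed : AllowedInterchange σ τ' := by
      refine ⟨F.length - 1, j, hi, hj, by omega, ?_, ?_, ?_, rfl⟩
      · rw [Fin.lt_def]; omega
      · rw [Fin.lt_def]; omega
      · rintro ⟨k, hk, hik, hkj, hlt⟩
        rw [Fin.lt_def] at hlt
        have hkF : F.length ≤ k := by omega
        have hkE : k - F.length < E.length := by
          simp only [List.length_append] at hkj hjdef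
          omega
        have hkval : (σ ⟨k, hk⟩ : ℕ) + 1 = E[k - F.length]'hkE := by
          rw [word_entry σ _ hword2 k hk (by omega)]
          rw [List.getElem_append_left (by simp only [List.length_append]; omega),
            List.getElem_append_right hkF]
        have hmem : E[k - F.length]'hkE ∈ E := List.getElem_mem _
        have := hE _ hmem
        omega
    -- pile preservation
    have hpiles : PSpiles (permWord τ') = PSpiles (permWord σ) := by
      rw [hword', hword2]
      have e1 : (F ++ E) ++ c :: x :: D₂ = ((F ++ E) ++ [c, x]) ++ D₂ := by simp
      have e2 : (F ++ E) ++ x :: c :: D₂ = ((F ++ E) ++ [x, c]) ++ D₂ := by simp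
      rw [e1, e2, PSpiles_append ((F ++ E) ++ [c, x]) D₂, PSpiles_append ((F ++ E) ++ [x, c]) D₂]
      have hQ : PSpiles (F ++ E) = (R' ++ [r]) ++ E.foldl (fun ps c => PSinsert c ps) [] := by
        rw [PSpiles_append, hF]
        have := foldl_skip (R' ++ [r]) E [] ?_
        · rw [← this]; simp
        · intro e he q hq
          rcases List.mem_append.1 hq with h' | h'
          · have := hskip q h'
            have := hE e he
            omega
          · have : q = r := by simpa using h'
            subst this
            have := hE e he
            omega
      have hcomm : PSpiles ((F ++ E) ++ [c, x]) = PSpiles ((F ++ E) ++ [x, c]) := by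
        rw [PSpiles_append (F ++ E) [c, x], PSpiles_append (F ++ E) [x, c], hQ]
        simp only [List.foldl_cons, List.foldl_nil]
        set Z := E.foldl (fun ps c => PSinsert c ps) [] with hZ
        have hidxc : pileIdx c ((R' ++ [r]) ++ Z) = R'.length := by
          rw [show (R' ++ [r]) ++ Z = R' ++ r :: Z by simp]
          exact pileIdx_hit c R' r Z hskip hct
        have hidxx : pileIdx x ((R' ++ [r]) ++ Z) = (R'.length + 1) + pileIdx x Z := by
          rw [pileIdx_skip x (R' ++ [r]) Z ?_]
          · simp
          · intro q hq
            rcases List.mem_append.1 hq with h' | h'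
            · have := hskip q h'
              omega
            · have : q = r := by simpa using h'
              subst this
              omega
        exact (PSinsert_comm c x _ (by omega)).symm
      rw [hcomm]
    -- apply the inner induction hypothesis
    obtain ⟨τ, hchain, hwordτ⟩ := ihE τ' (x :: D₂)
      (by rw [hword']; simp) hE
    refine ⟨τ, Relation.ReflTransGen.head ⟨hallowed, hpiles⟩ hchain, ?_⟩
    rw [hwordτ]
    simp

end Bubble

lemma nodup_permWord {n : ℕ} (σ : Equiv.Perm (Fin n)) : (permWord σ).Nodup := by
  rw [permWord, List.nodup_ofFn]
  intro a b hab
  simp at hab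
  exact σ.injective (Fin.ext hab)

lemma RPW_perm_flatten : ∀ P : List (List ℕ), List.Perm (RPW P) P.flatten := by
  intro P
  induction P with
  | nil => simp [RPW]
  | cons q P ih =>
    show List.Perm (q.reverse ++ RPW P) (q ++ P.flatten)
    exact List.Perm.append (List.reverse_perm q) ih

lemma length_RPW_PSpiles (u : List ℕ) : (RPW (PSpiles u)).length = u.length := by
  rw [(RPW_perm_flatten (PSpiles u)).length_eq, (flatten_PSpiles u).length_eq]

lemma PSpiles_concat (u : List ℕ) (c : ℕ) : PSpiles (u ++ [c]) = PSinsert c (PSpiles u) := by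
  simp [PSpiles, List.foldl_append]

lemma outer {n : ℕ} (σ : Equiv.Perm (Fin n)) : ∀ m : ℕ, m ≤ n →
    ∃ τ, Relation.ReflTransGen PSRel σ τ ∧
      permWord τ = RPW (PSpiles ((permWord σ).take m)) ++ (permWord σ).drop m := by
  intro m
  induction m with
  | zero =>
    intro _
    exact ⟨σ, Relation.ReflTransGen.refl, by simp [PSpiles, RPW]⟩
  | succ m ih =>
    intro hm1
    obtain ⟨τ₀, hchain₀, hword₀⟩ := ih (by omega)
    set w := permWord σ with hwdef
    have hwl : w.length = n := length_permWord σ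
    have hmw : m < w.length := by omega
    set c := w[m] with hcdef
    set Pm := PSpiles (w.take m) with hPmdef
    have hdropm : w.drop m = c :: w.drop (m+1) := List.drop_eq_getElem_cons hmw
    have htakem : w.take (m+1) = w.take m ++ [c] := by
      rw [List.take_succ]
      simp [List.getElem?_eq_getElem hmw, hcdef]
    have hPm1 : PSpiles (w.take (m+1)) = PSinsert c Pm := by
      rw [htakem, PSpiles_concat]
    have hvalid : ValidP Pm := validP_PSpiles _ ((nodup_permWord σ).sublist (List.take_sublist _ _))
    rcases decomp c Pm with hall | ⟨R', r, G, hPdecomp, hcr, hskipR'⟩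
    · -- c starts a new pile
      refine ⟨τ₀, hchain₀, ?_⟩
      rw [hPm1]
      have : PSinsert c Pm = Pm ++ [[c]] := by
        have := PSinsert_skip c Pm [] hall
        simpa [PSinsert] using this
      rw [this, RPW_append, hword₀, hdropm]
      simp [RPW]
    · -- c lands on pile r
      have hrne : r ≠ [] := hvalid.1 r (by rw [hPdecomp]; simp)
      have hPdecomp' : Pm = (R' ++ [r]) ++ G := by rw [hPdecomp]; simp
      set F := RPW (R' ++ [r]) with hFdef
      have hvalidRr : ValidP (R' ++ [r]) := validP_prefix _ G (hPdecomp' ▸ hvalid)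
      have hF : PSpiles F = R' ++ [r] := replay _ hvalidRr
      have hlast : F.getLast? = some r.headI := by
        rw [hFdef, show R' ++ [r] = R' ++ [r] from rfl, RPW_append]
        rw [List.getLast?_append_of_ne_nil _ (by simp [RPW]; exact hrne)]
        show (RPW [r]).getLast? = _
        have : RPW [r] = r.reverse := by simp [RPW]
        rw [this, List.getLast?_reverse]
        match r, hrne with
        | a :: r', _ => rfl
      have hD : ∀ e ∈ RPW G, r.headI < e := by
        intro e he
        have := (RPW_perm_flatten G).mem_iff.1 he
        obtain ⟨q, hq, heq⟩ := List.mem_flatten.1 this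
        have hsq : List.Pairwise (· < ·) q := hvalid.2.1 q (by rw [hPdecomp]; simp [hq])
        have h1 : q.headI ≤ e := headI_le_of_mem hsq heq
        have h2 : r.headI < q.headI := by
          have h3 := hvalid.2.2
          rw [hPdecomp, List.map_append, List.map_cons] at h3
          have := (List.pairwise_append.1 h3).2.1
          rw [List.pairwise_cons] at this
          exact this.1 q.headI (List.mem_map_of_mem hq)
        omega
      have hwordτ₀ : permWord τ₀ = F ++ (RPW G ++ c :: w.drop (m+1)) := by
        rw [hword₀, hdropm, hPdecomp', RPW_append]
        simp
        rfl
      obtain ⟨τ₁, hchain₁, hword₁⟩ :=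
        bubble F c R' r hF hskipR' hcr hlast (RPW G) τ₀ (w.drop (m+1)) hwordτ₀ hD
      refine ⟨τ₁, hchain₀.trans hchain₁, ?_⟩
      rw [hword₁, hPm1]
      match r, hrne, hcr, hF, hlast, hvalidRr with
      | a :: p, _, hcr, hF, hlast, hvalidRr =>
        rw [hPdecomp, PSinsert_hit c R' a p G hskipR' hcr]
        rw [show R' ++ (c :: a :: p) :: G = (R' ++ [c :: a :: p]) ++ G by simp, RPW_append]
        have : RPW (R' ++ [c :: a :: p]) = F ++ [c] := by
          rw [RPW_append, hFdef, RPW_append]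
          simp [RPW]
        rw [this]
        simp


end Aux

/-- Every permutation `σ` can be transformed into (a permutation whose
one-line word is) the reverse patience word `RPW(R(σ))` of its pile configuration by a
finite sequence of allowed interchanges, each of which preserves the pile configuration. -/
theorem stmt8 (n : ℕ) (σ : Equiv.Perm (Fin n)) :
    ∃ τ : Equiv.Perm (Fin n),
      Relation.ReflTransGen
        (fun a b => AllowedInterchange a b ∧ PSpiles (permWord b) = PSpiles (permWord a))
        σ τ ∧
      permWord τ = RPW (PSpiles (permWord σ)) := by
  obtain ⟨τ, hchain, hword⟩ := outer σ n (Nat.le_refl n)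
  refine ⟨τ, hchain, ?_⟩
  rw [hword]
  rw [List.take_of_length_le (by rw [length_permWord]), List.drop_of_length_le (by rw [length_permWord])]
  simp
end
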